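/- Let 𝓕_N(ψ) = (∑_{i=1}^N w(X_i) ψ(X_i)) / (∑_{i=1}^N w(X_i)) be the self-normalized importance-sampling estimator (defined to be 0 when the denominator vanishes). Then 𝓕_N(ψ) converges to μ(ψ) = ∫ ψ dμ in L²(P) as N → ∞, i.e. E[(𝓕_N(ψ) − μ(ψ))²] → 0; in particular 𝓕_N(ψ) is a weakly consistent estimator of μ(ψ). (Theorem 1 of the paper in the single-importance-sampling-step case, which is the base case t = 0 of its induction.) -/

import Mathlib

open MeasureTheory ProbabilityTheory Filter Topology

/-- **Theorem 1 (base case `t = 0`):** the self-normalized importance-sampling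
estimator `𝓕_N(ψ)` converges to `μ(ψ)` in `L²(P)` as `N → ∞`. -/
theorem selfNormalizedIS_L2_convergence
    {𝒳 : Type*} [MeasurableSpace 𝒳]
    (lam mu : Measure 𝒳) [IsProbabilityMeasure lam] [IsProbabilityMeasure mu]
    (w : 𝒳 → ℝ) (hw_meas : Measurable w) (hw_nonneg : ∀ x, 0 ≤ w x)
    (hmu : mu = lam.withDensity (fun x => ENNReal.ofReal (w x)))
    (C : ℝ) (hC : 0 < C) (hw_bdd : ∀ᵐ x ∂lam, w x ≤ C)
    (ψ : 𝒳 → ℝ) (hψ_meas : Measurable ψ)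
    (M : ℝ) (hψ_bdd : ∀ x, |ψ x| ≤ M)
    {Ω : Type*} [MeasurableSpace Ω] (P : Measure Ω) [IsProbabilityMeasure P]
    (X : ℕ → Ω → 𝒳) (hX_meas : ∀ i, Measurable (X i))
    (hX_law : ∀ i, P.map (X i) = lam)
    (hX_indep : iIndepFun X P) :
    Tendsto
      (fun N : ℕ =>
        ∫ ω, ((∑ i ∈ Finset.range N, w (X i ω) * ψ (X i ω)) /
                (∑ i ∈ Finset.range N, w (X i ω)) - ∫ x, ψ x ∂mu) ^ 2 ∂P)
      atTop (nhds 0) := by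
  set M' : ℝ := max M 0 with hM'def
  have hM'0 : 0 ≤ M' := le_max_right _ _
  have hψM' : ∀ x, |ψ x| ≤ M' := fun x => (hψ_bdd x).trans (le_max_left _ _)
  set Y : ℕ → Ω → ℝ := fun i ω => w (X i ω) with hYdef
  set Z : ℕ → Ω → ℝ := fun i ω => w (X i ω) * ψ (X i ω) with hZdef
  have hYmeas : ∀ i, Measurable (Y i) := fun i => hw_meas.comp (hX_meas i)
  have hZmeas : ∀ i, Measurable (Z i) := fun i =>
    (hw_meas.comp (hX_meas i)).mul (hψ_meas.comp (hX_meas i))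
  -- a.e. bound on w ∘ X i under P
  have hbd : ∀ i, ∀ᵐ ω ∂P, w (X i ω) ≤ C := by
    intro i
    have h : ∀ᵐ x ∂(P.map (X i)), w x ≤ C := by rw [hX_law i]; exact hw_bdd
    exact (ae_map_iff (hX_meas i).aemeasurable
      (measurableSet_le hw_meas measurable_const)).1 h
  have hYint : Integrable (Y 0) P := by
    refine Integrable.mono' (integrable_const C) (hYmeas 0).aestronglyMeasurable ?_
    filter_upwards [hbd 0] with ω hω
    rw [Real.norm_eq_abs, abs_of_nonneg (hw_nonneg _)]; exact hω
  have hZint : Integrable (Z 0) P := by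
    refine Integrable.mono' (integrable_const (C * M')) (hZmeas 0).aestronglyMeasurable ?_
    filter_upwards [hbd 0] with ω hω
    rw [Real.norm_eq_abs, hZdef]
    simp only
    rw [abs_mul, abs_of_nonneg (hw_nonneg _)]
    exact mul_le_mul hω (hψM' _) (abs_nonneg _) hC.le
  -- identical distribution
  have hXid : ∀ i, IdentDistrib (X i) (X 0) P P := fun i =>
    ⟨(hX_meas i).aemeasurable, (hX_meas 0).aemeasurable, by rw [hX_law i, hX_law 0]⟩
  have hYid : ∀ i, IdentDistrib (Y i) (Y 0) P P := fun i => (hXid i).comp hw_meas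
  have hZid : ∀ i, IdentDistrib (Z i) (Z 0) P P := fun i =>
    (hXid i).comp (hw_meas.mul hψ_meas)
  have hYindep : Pairwise (Function.onFun (IndepFun · · P) Y) := fun i j hij =>
    (hX_indep.indepFun hij).comp hw_meas hw_meas
  have hZindep : Pairwise (Function.onFun (IndepFun · · P) Z) := fun i j hij =>
    (hX_indep.indepFun hij).comp (hw_meas.mul hψ_meas) (hw_meas.mul hψ_meas)
  -- expectations
  have hEw : ∫ x, w x ∂lam = 1 := by
    have h1 : ∫⁻ x, ENNReal.ofReal (w x) ∂lam = 1 := by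
      have := congrArg (fun m : Measure 𝒳 => m Set.univ) hmu
      simpa [withDensity_apply _ MeasurableSet.univ] using this.symm
    rw [integral_eq_lintegral_of_nonneg_ae (Filter.Eventually.of_forall hw_nonneg)
      hw_meas.aestronglyMeasurable, h1]
    simp
  have hEY : ∫ ω, Y 0 ω ∂P = 1 := by
    have := integral_map (μ := P) (hX_meas 0).aemeasurable hw_meas.aestronglyMeasurable
    rw [hX_law 0] at this
    show ∫ ω, w (X 0 ω) ∂P = 1
    rw [← this]; exact hEw
  have hEwψ : ∫ x, w x * ψ x ∂lam = ∫ x, ψ x ∂mu := by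
    rw [hmu]
    have h := integral_withDensity_eq_integral_smul
      (μ := lam) (f := fun x => (w x).toNNReal) hw_meas.real_toNNReal ψ
    rw [show (fun x => ENNReal.ofReal (w x)) = (fun x => ((w x).toNNReal : ENNReal)) from rfl, h]
    congr 1
    ext x
    simp [NNReal.smul_def, Real.coe_toNNReal _ (hw_nonneg x)]
  have hEZ : ∫ ω, Z 0 ω ∂P = ∫ x, ψ x ∂mu := by
    have := integral_map (μ := P) (f := fun x => w x * ψ x) (hX_meas 0).aemeasurable
      (hw_meas.mul hψ_meas).aestronglyMeasurable
    rw [hX_law 0] at this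
    show ∫ ω, w (X 0 ω) * ψ (X 0 ω) ∂P = ∫ x, ψ x ∂mu
    rw [← this]; exact hEwψ
  -- strong law of large numbers
  have hSY := ProbabilityTheory.strong_law_ae_real Y hYint hYindep hYid
  have hSZ := ProbabilityTheory.strong_law_ae_real Z hZint hZindep hZid
  rw [hEY] at hSY
  rw [hEZ] at hSZ
  set μψ : ℝ := ∫ x, ψ x ∂mu with hμψdef
  -- a.e. convergence of the squared error
  have hconv : ∀ᵐ ω ∂P, Tendsto (fun N : ℕ =>
      ((∑ i ∈ Finset.range N, Z i ω) / (∑ i ∈ Finset.range N, Y i ω) - μψ) ^ 2)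
      atTop (𝓝 0) := by
    filter_upwards [hSY, hSZ] with ω hYω hZω
    have h1 : Tendsto (fun N : ℕ =>
        (∑ i ∈ Finset.range N, Z i ω) / (∑ i ∈ Finset.range N, Y i ω))
        atTop (𝓝 μψ) := by
      have h2 := hZω.div hYω one_ne_zero
      rw [div_one] at h2
      refine h2.congr' ?_
      filter_upwards [eventually_ge_atTop 1] with N hN
      have hN0 : (N : ℝ) ≠ 0 := Nat.cast_ne_zero.2 (by omega)
      have key : ∀ a b : ℝ, a / (N : ℝ) / (b / (N : ℝ)) = a / b := by
        intro a b
        rcases eq_or_ne b 0 with hb | hb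
        · simp [hb]
        · field_simp
      simp only [Pi.div_apply]
      exact key _ _
    have h3 : Tendsto (fun N : ℕ =>
        ((∑ i ∈ Finset.range N, Z i ω) / (∑ i ∈ Finset.range N, Y i ω) - μψ) ^ 2)
        atTop (𝓝 ((μψ - μψ) ^ 2)) := (h1.sub tendsto_const_nhds).pow 2
    simpa using h3
  -- uniform bound
  have hratio : ∀ (N : ℕ) (ω : Ω),
      |(∑ i ∈ Finset.range N, Z i ω) / (∑ i ∈ Finset.range N, Y i ω)| ≤ M' := by
    intro N ω
    have hS : 0 ≤ ∑ i ∈ Finset.range N, Y i ω :=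
      Finset.sum_nonneg fun i _ => hw_nonneg (X i ω)
    rcases hS.lt_or_eq with h0 | h0
    · rw [abs_div, abs_of_pos h0, div_le_iff₀ h0]
      calc |∑ i ∈ Finset.range N, Z i ω| ≤ ∑ i ∈ Finset.range N, |Z i ω| :=
            Finset.abs_sum_le_sum_abs _ _
        _ ≤ ∑ i ∈ Finset.range N, M' * Y i ω := by
            refine Finset.sum_le_sum fun i _ => ?_
            have : |Z i ω| = w (X i ω) * |ψ (X i ω)| := by
              rw [hZdef]; simp only
              rw [abs_mul, abs_of_nonneg (hw_nonneg _)]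
            rw [this, mul_comm M' _]
            exact mul_le_mul_of_nonneg_left (hψM' _) (hw_nonneg _)
        _ = M' * ∑ i ∈ Finset.range N, Y i ω := by rw [Finset.mul_sum]
    · rw [← h0, div_zero, abs_zero]; exact hM'0
  have hμψbd : |μψ| ≤ M' := by
    have h := norm_integral_le_of_norm_le_const (μ := mu) (C := M')
      (Filter.Eventually.of_forall fun x => by
        simpa [Real.norm_eq_abs] using hψM' x) (f := ψ)
    simpa [Real.norm_eq_abs] using h
  -- dominated convergence
  have hmeasF : ∀ N : ℕ, AEStronglyMeasurable (fun ω =>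
      ((∑ i ∈ Finset.range N, Z i ω) / (∑ i ∈ Finset.range N, Y i ω) - μψ) ^ 2) P := by
    intro N
    exact ((((Finset.measurable_sum _ fun i _ => hZmeas i).div
      (Finset.measurable_sum _ fun i _ => hYmeas i)).sub measurable_const).pow
      measurable_const).aestronglyMeasurable
  have hbound : ∀ N : ℕ, ∀ᵐ ω ∂P, ‖((∑ i ∈ Finset.range N, Z i ω) /
      (∑ i ∈ Finset.range N, Y i ω) - μψ) ^ 2‖ ≤ (2 * M') ^ 2 := by
    intro N
    refine Filter.Eventually.of_forall fun ω => ?_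
    have habs : |(∑ i ∈ Finset.range N, Z i ω) / (∑ i ∈ Finset.range N, Y i ω) - μψ|
        ≤ 2 * M' := by
      calc |(∑ i ∈ Finset.range N, Z i ω) / (∑ i ∈ Finset.range N, Y i ω) - μψ|
          ≤ |(∑ i ∈ Finset.range N, Z i ω) / (∑ i ∈ Finset.range N, Y i ω)| + |μψ| :=
            abs_sub _ _
        _ ≤ M' + M' := add_le_add (hratio N ω) hμψbd
        _ = 2 * M' := by ring
    rw [Real.norm_eq_abs, abs_of_nonneg (sq_nonneg _)]
    exact sq_le_sq' (neg_le_of_abs_le habs) (le_of_abs_le habs)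
  have hdom := tendsto_integral_of_dominated_convergence (μ := P)
    (F := fun N ω => ((∑ i ∈ Finset.range N, Z i ω) /
      (∑ i ∈ Finset.range N, Y i ω) - μψ) ^ 2)
    (f := fun _ => (0 : ℝ)) (fun _ => (2 * M') ^ 2) hmeasF
    (integrable_const _) hbound hconv
  simpa using hdom
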